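/- Let A be an ε-differentially private randomized algorithm with domain 𝒳^n and finite range 𝒴, let 𝒫 be a distribution over 𝒳, and let S be a random dataset drawn from the product distribution 𝒫^n. Let Y = A(S). Assume that for each element y ∈ 𝒴 there is a subset R(y) ⊆ 𝒳^n such that max_{y∈𝒴} Pr[S ∈ R(y)] ≤ β. Then, for ε ≤ √( ln(1/β) / (2n) ), we have Pr[ S ∈ R(Y) ] ≤ 3√β. -/

import Mathlib

open scoped ENNReal

/-- Probability of an event under a PMF. -/
noncomputable def pr {Z : Type*} (p : PMF Z) (O : Set Z) : ℝ≥0∞ :=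
  p.toOuterMeasure O

/-- Joint distribution of (input, output). -/
noncomputable def joint {A B : Type*} (μ : PMF A) (f : A → PMF B) : PMF (A × B) :=
  μ.bind fun a => (f a).map fun b => (a, b)

/-- Two datasets are adjacent if they differ in a single element. -/
def Adjacent {X : Type*} {n : ℕ} (S S' : Fin n → X) : Prop :=
  ∃ i : Fin n, ∀ j : Fin n, j ≠ i → S j = S' j

/-- ε-differential privacy: for all adjacent datasets `S, S'` and every output `y`,
`Pr[A(S) = y] ≤ e^ε · Pr[A(S') = y]`. -/
def DiffPrivate {X Y : Type*} {n : ℕ} (A : (Fin n → X) → PMF Y) (ε : ℝ) : Prop :=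
  ∀ S S' : Fin n → X, Adjacent S S' → ∀ y : Y,
    A S y ≤ ENNReal.ofReal (Real.exp ε) * A S' y

/-- The distribution of `n` i.i.d. samples from `P`. -/
noncomputable def iid {X : Type*} (P : PMF X) : (n : ℕ) → PMF (Fin n → X)
  | 0 => PMF.pure fun i => i.elim0
  | n + 1 => (iid P n).bind fun S => P.map fun x => Fin.cons x S

/-! ### Auxiliary analytic lemmas -/

lemma hoeffding_core (p t : ℝ) (hp : 0 ≤ p) (hp1 : p ≤ 1) (ht : 0 ≤ t) :
    Real.log (p * Real.exp t + (1 - p)) ≤ p * t + t ^ 2 / 8 := by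
  set q : ℝ := 1 - p with hq
  have hq0 : 0 ≤ q := by simp [hq]; linarith
  have hD : ∀ x : ℝ, 0 < p * Real.exp x + q := by
    intro x
    rcases eq_or_lt_of_le hp with h | h
    · simp [← h, hq]
    · have := Real.exp_pos x
      nlinarith
  have hD' : ∀ x : ℝ, HasDerivAt (fun x => p * Real.exp x + q) (p * Real.exp x) x := by
    intro x
    exact ((Real.hasDerivAt_exp x).const_mul p).add_const q
  set ψ : ℝ → ℝ := fun x => p * Real.exp x / (p * Real.exp x + q) - p - x / 4 with hψdef
  have hψ : ∀ x : ℝ, HasDerivAt ψ (p * Real.exp x * q / (p * Real.exp x + q) ^ 2 - 1 / 4) x := by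
    intro x
    have h1 : HasDerivAt (fun x => p * Real.exp x / (p * Real.exp x + q))
        ((p * Real.exp x * (p * Real.exp x + q) - p * Real.exp x * (p * Real.exp x)) /
          (p * Real.exp x + q) ^ 2) x :=
      ((Real.hasDerivAt_exp x).const_mul p).div (hD' x) (ne_of_gt (hD x))
    have h2 : HasDerivAt (fun x : ℝ => p * Real.exp x / (p * Real.exp x + q) - p)
        ((p * Real.exp x * (p * Real.exp x + q) - p * Real.exp x * (p * Real.exp x)) /
          (p * Real.exp x + q) ^ 2) x := h1.sub_const p
    have h3 : HasDerivAt (fun x : ℝ => x / 4) (1 / 4) x := (hasDerivAt_id x).div_const 4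
    refine (h2.sub h3).congr_deriv ?_
    field_simp
    ring
  have hψ0 : ψ 0 = 0 := by
    simp [hψdef, hq]
  have hψder_nonpos : ∀ x : ℝ, p * Real.exp x * q / (p * Real.exp x + q) ^ 2 - 1 / 4 ≤ 0 := by
    intro x
    have h := hD x
    rw [sub_nonpos, div_le_iff₀ (by positivity)]
    nlinarith [sq_nonneg (p * Real.exp x - q)]
  have hψanti : AntitoneOn ψ (Set.Ici (0:ℝ)) := by
    apply antitoneOn_of_deriv_nonpos (convex_Ici 0)
    · exact fun x _ => ((hψ x).continuousAt).continuousWithinAt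
    · exact fun x _ => ((hψ x).differentiableAt).differentiableWithinAt
    · intro x _
      rw [(hψ x).deriv]
      exact hψder_nonpos x
  have hψle : ∀ x : ℝ, 0 ≤ x → ψ x ≤ 0 := by
    intro x hx
    have := hψanti (Set.self_mem_Ici) (Set.mem_Ici.2 hx) hx
    rw [hψ0] at this
    exact this
  set φ : ℝ → ℝ := fun x => Real.log (p * Real.exp x + q) - p * x - x ^ 2 / 8 with hφdef
  have hφ : ∀ x : ℝ, HasDerivAt φ (ψ x) x := by
    intro x
    have h1 : HasDerivAt (fun x => Real.log (p * Real.exp x + q))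
        (p * Real.exp x / (p * Real.exp x + q)) x := (hD' x).log (ne_of_gt (hD x))
    have h2 : HasDerivAt (fun x : ℝ => p * x) p x := by
      simpa using (hasDerivAt_id x).const_mul p
    have h3 : HasDerivAt (fun x : ℝ => x ^ 2 / 8) (2 * x ^ 1 / 8) x :=
      (hasDerivAt_pow 2 x).div_const 8
    refine ((h1.sub h2).sub h3).congr_deriv ?_
    simp [hψdef]
    ring
  have hφanti : AntitoneOn φ (Set.Ici (0:ℝ)) := by
    apply antitoneOn_of_deriv_nonpos (convex_Ici 0)
    · exact fun x _ => ((hφ x).continuousAt).continuousWithinAt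
    · exact fun x _ => ((hφ x).differentiableAt).differentiableWithinAt
    · intro x hx
      rw [(hφ x).deriv]
      exact hψle x (le_of_lt (by simpa using hx))
  have hφ0 : φ 0 = 0 := by
    have h1 : p + q = 1 := by simp [hq]
    simp [hφdef, h1]
  have := hφanti (Set.self_mem_Ici) (Set.mem_Ici.2 ht) ht
  rw [hφ0] at this
  simp only [hφdef] at this
  linarith

lemma exp_convex_bound (θ c : ℝ) (h0 : 0 ≤ θ) (h1 : θ ≤ 1) :
    Real.exp (θ * c) ≤ θ * Real.exp c + (1 - θ) := by
  have h := convexOn_exp.2 (Set.mem_univ c) (Set.mem_univ (0:ℝ)) h0 (by linarith)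
    (by ring : θ + (1 - θ) = 1)
  simpa using h

lemma two_point (a b θ ε : ℝ) (ha : 0 < a) (hab : a ≤ b) (hba : b ≤ Real.exp ε * a)
    (hθ0 : 0 ≤ θ) (hθ1 : θ ≤ 1) :
    (1 - θ) * a ^ 4 + θ * b ^ 4 ≤ Real.exp (2 * ε ^ 2) * ((1 - θ) * a + θ * b) ^ 4 := by
  have hb0 : 0 < b := lt_of_lt_of_le ha hab
  set c := Real.log (b / a) with hcdef
  have hc0 : 0 ≤ c := Real.log_nonneg ((one_le_div ha).2 hab)
  have hcε : c ≤ ε := by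
    rw [hcdef, Real.log_le_iff_le_exp (by positivity)]
    rw [div_le_iff₀ ha]
    nlinarith [hba]
  have hbc : b = a * Real.exp c := by
    rw [hcdef, Real.exp_log (by positivity : (0:ℝ) < b / a)]
    field_simp
  have he4 : Real.exp (4 * c) = Real.exp c ^ 4 := by
    rw [show (4:ℝ) * c = ((4:ℕ):ℝ) * c by norm_num, Real.exp_nat_mul]
  have key : θ * Real.exp (4 * c) + (1 - θ) ≤
      Real.exp (2 * ε ^ 2) * (θ * Real.exp c + (1 - θ)) ^ 4 := by
    have h1 := hoeffding_core θ (4 * c) hθ0 hθ1 (by linarith)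
    have hpos : 0 < θ * Real.exp (4 * c) + (1 - θ) := by
      have h2 : 1 ≤ Real.exp (4 * c) := Real.one_le_exp (by linarith)
      nlinarith
    have h2 : θ * Real.exp (4 * c) + (1 - θ) ≤ Real.exp (θ * (4 * c) + (4 * c) ^ 2 / 8) := by
      calc θ * Real.exp (4 * c) + (1 - θ)
          = Real.exp (Real.log (θ * Real.exp (4 * c) + (1 - θ))) := (Real.exp_log hpos).symm
        _ ≤ _ := Real.exp_le_exp.2 h1
    have h3 : Real.exp (θ * (4 * c) + (4 * c) ^ 2 / 8) =
        Real.exp (2 * c ^ 2) * Real.exp (θ * c) ^ 4 := by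
      rw [show Real.exp (θ * c) ^ 4 = Real.exp (((4:ℕ):ℝ) * (θ * c)) by rw [Real.exp_nat_mul],
        ← Real.exp_add]
      congr 1
      push_cast
      ring
    calc θ * Real.exp (4 * c) + (1 - θ)
        ≤ Real.exp (2 * c ^ 2) * Real.exp (θ * c) ^ 4 := by rw [← h3]; exact h2
      _ ≤ Real.exp (2 * ε ^ 2) * (θ * Real.exp c + (1 - θ)) ^ 4 := by
          apply mul_le_mul
          · exact Real.exp_le_exp.2 (by nlinarith)
          · exact pow_le_pow_left₀ (Real.exp_nonneg _) (exp_convex_bound θ c hθ0 hθ1) 4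
          · positivity
          · positivity
  have hbne : b ^ 4 = a ^ 4 * Real.exp (4 * c) := by rw [hbc, he4]; ring
  have hsum : (1 - θ) * a + θ * b = a * (θ * Real.exp c + (1 - θ)) := by rw [hbc]; ring
  calc (1 - θ) * a ^ 4 + θ * b ^ 4 = a ^ 4 * (θ * Real.exp (4 * c) + (1 - θ)) := by
        rw [hbne]; ring
    _ ≤ a ^ 4 * (Real.exp (2 * ε ^ 2) * (θ * Real.exp c + (1 - θ)) ^ 4) :=
        mul_le_mul_of_nonneg_left key (by positivity)
    _ = Real.exp (2 * ε ^ 2) * ((1 - θ) * a + θ * b) ^ 4 := by rw [hsum]; ring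

lemma single_var {X : Type*} [Fintype X] (w g : X → ℝ) (ε : ℝ)
    (hw : ∀ x, 0 ≤ w x) (hw1 : ∑ x, w x = 1)
    (hg : ∀ x, 0 ≤ g x) (hr : ∀ x x', g x ≤ Real.exp ε * g x') :
    ∑ x, w x * g x ^ 4 ≤ Real.exp (2 * ε ^ 2) * (∑ x, w x * g x) ^ 4 := by
  have hXne : Nonempty X := by
    rcases isEmpty_or_nonempty X with hE | hN
    · simp [Finset.univ_eq_empty] at hw1
    · exact hN
  obtain ⟨xm, _, hxm⟩ := Finset.exists_min_image Finset.univ g Finset.univ_nonempty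
  obtain ⟨xM, _, hxM⟩ := Finset.exists_max_image Finset.univ g Finset.univ_nonempty
  set a := g xm with hadef
  set b := g xM with hbdef
  have hab : a ≤ b := hxm xM (Finset.mem_univ xM)
  have hba : b ≤ Real.exp ε * a := hr xM xm
  have hone : 1 ≤ Real.exp (2 * ε ^ 2) := Real.one_le_exp (by positivity)
  rcases eq_or_lt_of_le (hg xm) with h0 | h0
  · have hgz : ∀ x, g x = 0 := by
      intro x
      have h1 : g x ≤ b := hxM x (Finset.mem_univ x)
      have h2 : b ≤ 0 := by
        have ha0 : a = 0 := by rw [hadef, ← h0]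
        rw [ha0] at hba; simpa using hba
      exact le_antisymm (le_trans h1 h2) (hg x)
    simp [hgz]
  · set m := ∑ x, w x * g x with hmdef
    have hm_lb : a ≤ m := by
      have h1 : ∑ x, w x * a ≤ m := by
        exact Finset.sum_le_sum fun x _ => mul_le_mul_of_nonneg_left (hxm x (Finset.mem_univ x)) (hw x)
      rwa [← Finset.sum_mul, hw1, one_mul] at h1
    have hm_ub : m ≤ b := by
      have h1 : m ≤ ∑ x, w x * b :=
        Finset.sum_le_sum fun x _ => mul_le_mul_of_nonneg_left (hxM x (Finset.mem_univ x)) (hw x)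
      rwa [← Finset.sum_mul, hw1, one_mul] at h1
    rcases eq_or_lt_of_le hab with heq | hlt
    · have hgc : ∀ x, g x = a :=
        fun x => le_antisymm (heq ▸ hxM x (Finset.mem_univ x)) (hxm x (Finset.mem_univ x))
      have hma : m = a := by
        rw [hmdef]
        calc ∑ x, w x * g x = ∑ x, w x * a := by simp only [hgc]
          _ = a := by rw [← Finset.sum_mul, hw1, one_mul]
      calc ∑ x, w x * g x ^ 4 = ∑ x, w x * a ^ 4 := by simp only [hgc]
        _ = a ^ 4 := by rw [← Finset.sum_mul, hw1, one_mul]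
        _ ≤ Real.exp (2 * ε ^ 2) * m ^ 4 := by rw [hma]; nlinarith [pow_nonneg (le_of_lt h0) 4]
    · set θ := (m - a) / (b - a) with hθdef
      have hθ0 : 0 ≤ θ := div_nonneg (by linarith) (by linarith)
      have hθ1 : θ ≤ 1 := (div_le_one (by linarith)).2 (by linarith)
      have hba0 : b - a ≠ 0 := sub_ne_zero.2 (ne_of_gt hlt)
      have hcomb : (1 - θ) * a + θ * b = m := by
        have h6 : θ * (b - a) = m - a := by rw [hθdef, div_mul_cancel₀ _ hba0]
        linear_combination h6
      have chord : ∀ x, g x ^ 4 ≤ ((b - g x) * a ^ 4 + (g x - a) * b ^ 4) / (b - a) := by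
        intro x
        rw [le_div_iff₀ (by linarith)]
        have h1 : a ≤ g x := hxm x (Finset.mem_univ x)
        have h2 : g x ≤ b := hxM x (Finset.mem_univ x)
        have hbr : 0 ≤ (b ^ 3 + b ^ 2 * g x + b * g x ^ 2) - (a * g x ^ 2 + a ^ 2 * g x + a ^ 3) := by
          have h3 : a ^ 3 ≤ b ^ 3 := pow_le_pow_left₀ (hg xm) hab 3
          have h4 : a ^ 2 * g x ≤ b ^ 2 * g x :=
            mul_le_mul_of_nonneg_right (pow_le_pow_left₀ (hg xm) hab 2) (hg x)
          have h5 : a * g x ^ 2 ≤ b * g x ^ 2 :=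
            mul_le_mul_of_nonneg_right hab (sq_nonneg (g x))
          linarith
        have hP : 0 ≤ (b - g x) * (g x - a) *
            ((b ^ 3 + b ^ 2 * g x + b * g x ^ 2) - (a * g x ^ 2 + a ^ 2 * g x + a ^ 3)) :=
          mul_nonneg (mul_nonneg (by linarith) (by linarith)) hbr
        nlinarith [hP]
      have expand : ∀ x, w x * (((b - g x) * a ^ 4 + (g x - a) * b ^ 4) / (b - a)) =
          (w x * (b * a ^ 4 - a * b ^ 4) + w x * g x * (b ^ 4 - a ^ 4)) / (b - a) := by
        intro x
        field_simp
        ring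
      calc ∑ x, w x * g x ^ 4
          ≤ ∑ x, w x * (((b - g x) * a ^ 4 + (g x - a) * b ^ 4) / (b - a)) :=
            Finset.sum_le_sum fun x _ => mul_le_mul_of_nonneg_left (chord x) (hw x)
        _ = (1 - θ) * a ^ 4 + θ * b ^ 4 := by
            rw [Finset.sum_congr rfl fun x _ => expand x, ← Finset.sum_div,
              Finset.sum_add_distrib, ← Finset.sum_mul, ← Finset.sum_mul, hw1, ← hmdef]
            rw [hθdef]
            field_simp [hba0]
            ring
        _ ≤ Real.exp (2 * ε ^ 2) * ((1 - θ) * a + θ * b) ^ 4 :=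
            two_point a b θ ε h0 hab hba hθ0 hθ1
        _ = Real.exp (2 * ε ^ 2) * m ^ 4 := by rw [hcomb]

/-! ### Adjacency and product-measure lemmas -/

lemma adjacent_cons {X : Type*} {n : ℕ} (x : X) {S S' : Fin n → X} (h : Adjacent S S') :
    Adjacent (Fin.cons x S) (Fin.cons x S') := by
  obtain ⟨i, hi⟩ := h
  refine ⟨i.succ, fun j hj => ?_⟩
  induction j using Fin.cases with
  | zero => simp
  | succ k =>
    simp only [Fin.cons_succ]
    exact hi k (fun hk => hj (by rw [hk]))

lemma adjacent_cons_head {X : Type*} {n : ℕ} (x x' : X) (S : Fin n → X) :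
    Adjacent (Fin.cons x S) (Fin.cons x' S) := by
  refine ⟨0, fun j hj => ?_⟩
  induction j using Fin.cases with
  | zero => exact absurd rfl hj
  | succ k => simp

lemma sum_cons_eq {X : Type*} [Fintype X] {n : ℕ} (h : (Fin (n + 1) → X) → ℝ) :
    ∑ S, h S = ∑ x : X, ∑ S : Fin n → X, h (Fin.cons x S) := by
  rw [← Equiv.sum_comp (Fin.consEquiv fun _ : Fin (n + 1) => X) h, Fintype.sum_prod_type]
  rfl

lemma moment {X : Type*} [Fintype X] (w : X → ℝ) (hw : ∀ x, 0 ≤ w x) (hw1 : ∑ x, w x = 1)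
    (ε : ℝ) :
    ∀ (n : ℕ) (f : (Fin n → X) → ℝ), (∀ S, 0 ≤ f S) →
      (∀ S S', Adjacent S S' → f S ≤ Real.exp ε * f S') →
      ∑ S : Fin n → X, (∏ i, w (S i)) * f S ^ 4 ≤
        Real.exp (2 * n * ε ^ 2) * (∑ S : Fin n → X, (∏ i, w (S i)) * f S) ^ 4 := by
  intro n
  induction n with
  | zero =>
    intro f hf hlip
    rw [Fintype.sum_unique, Fintype.sum_unique]
    simp
  | succ n IH =>
    intro f hf hlip
    set g : X → ℝ := fun x => ∑ S : Fin n → X, (∏ i, w (S i)) * f (Fin.cons x S) with hgdef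
    have hprodnn : ∀ S : Fin n → X, 0 ≤ ∏ i, w (S i) :=
      fun S => Finset.prod_nonneg fun i _ => hw (S i)
    have hg0 : ∀ x, 0 ≤ g x :=
      fun x => Finset.sum_nonneg fun S _ => mul_nonneg (hprodnn S) (hf _)
    have hgr : ∀ x x', g x ≤ Real.exp ε * g x' := by
      intro x x'
      rw [hgdef]
      simp only []
      rw [Finset.mul_sum]
      apply Finset.sum_le_sum
      intro S _
      rw [show Real.exp ε * ((∏ i, w (S i)) * f (Fin.cons x' S)) =
        (∏ i, w (S i)) * (Real.exp ε * f (Fin.cons x' S)) by ring]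
      exact mul_le_mul_of_nonneg_left (hlip _ _ (adjacent_cons_head x x' S)) (hprodnn S)
    have hprod : ∀ (x : X) (S : Fin n → X),
        (∏ i : Fin (n + 1), w ((Fin.cons x S : Fin (n + 1) → X) i)) = w x * ∏ i : Fin n, w (S i) := by
      intro x S
      rw [Fin.prod_univ_succ]
      simp
    have hsum2 : ∑ S : Fin (n + 1) → X, (∏ i, w (S i)) * f S = ∑ x, w x * g x := by
      rw [sum_cons_eq]
      apply Finset.sum_congr rfl
      intro x _
      rw [hgdef]
      simp only []
      rw [Finset.mul_sum]
      apply Finset.sum_congr rfl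
      intro S _
      rw [hprod]
      ring
    rw [hsum2]
    calc ∑ S : Fin (n + 1) → X, (∏ i, w (S i)) * f S ^ 4
        = ∑ x, w x * ∑ S : Fin n → X, (∏ i, w (S i)) * f (Fin.cons x S) ^ 4 := by
          rw [sum_cons_eq]
          apply Finset.sum_congr rfl
          intro x _
          rw [Finset.mul_sum]
          apply Finset.sum_congr rfl
          intro S _
          rw [hprod]
          ring
      _ ≤ ∑ x, w x * (Real.exp (2 * n * ε ^ 2) * g x ^ 4) := by
          apply Finset.sum_le_sum
          intro x _
          exact mul_le_mul_of_nonneg_left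
            (IH (fun S => f (Fin.cons x S)) (fun S => hf _)
              (fun S S' h => hlip _ _ (adjacent_cons x h))) (hw x)
      _ = Real.exp (2 * n * ε ^ 2) * ∑ x, w x * g x ^ 4 := by
          rw [Finset.mul_sum]
          apply Finset.sum_congr rfl
          intro x _
          ring
      _ ≤ Real.exp (2 * n * ε ^ 2) * (Real.exp (2 * ε ^ 2) * (∑ x, w x * g x) ^ 4) :=
          mul_le_mul_of_nonneg_left (single_var w g ε hw hw1 hg0 hgr) (Real.exp_nonneg _)
      _ = Real.exp (2 * (n + 1 : ℕ) * ε ^ 2) * (∑ x, w x * g x) ^ 4 := by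
          rw [← mul_assoc, ← Real.exp_add]
          congr 2
          push_cast
          ring

lemma joint_apply {A B : Type*} (μ : PMF A) (f : A → PMF B) (a : A) (b : B) :
    joint μ f (a, b) = μ a * f a b := by
  classical
  rw [joint, PMF.bind_apply]
  rw [tsum_eq_single a]
  · congr 1
    rw [PMF.map_apply]
    rw [tsum_eq_single b]
    · simp
    · intro b' hb'
      simp [Prod.ext_iff, Ne.symm hb']
  · intro a' ha'
    rw [PMF.map_apply]
    exact mul_eq_zero_of_right _ (ENNReal.tsum_eq_zero.2 fun b' =>
      if_neg fun hc => ha' (congrArg Prod.fst hc).symm)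

lemma iid_apply {X : Type*} (P : PMF X) : ∀ (n : ℕ) (S : Fin n → X),
    iid P n S = ∏ i, P (S i) := by
  classical
  intro n
  induction n with
  | zero =>
    intro S
    rw [show S = (fun i => i.elim0) from Subsingleton.elim _ _]
    simp [iid]
  | succ n IH =>
    intro S
    rw [iid, PMF.bind_apply]
    have hmap : ∀ T : Fin n → X,
        iid P n T * (P.map fun x => Fin.cons x T) S
          = if Fin.tail S = T then iid P n T * P (S 0) else 0 := by
      intro T
      rw [PMF.map_apply]
      by_cases h : Fin.tail S = T
      · subst h
        rw [if_pos rfl]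
        congr 1
        rw [tsum_eq_single (S 0)]
        · rw [if_pos (Fin.cons_self_tail S).symm]
        · intro x hx
          rw [if_neg]
          intro hS
          exact hx (by rw [hS, Fin.cons_zero])
      · rw [if_neg h]
        refine mul_eq_zero_of_right _ (ENNReal.tsum_eq_zero.2 fun x => if_neg fun hS => h ?_)
        rw [hS, Fin.tail_cons]
    rw [tsum_congr hmap, tsum_eq_single (Fin.tail S)]
    · rw [if_pos rfl, IH, Fin.prod_univ_succ, mul_comm]
      rfl
    · intro T hT
      exact if_neg fun hc => hT hc.symm

lemma pmf_sum_toReal {Z : Type*} [Fintype Z] (p : PMF Z) : ∑ z, (p z).toReal = 1 := by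
  have h := p.tsum_coe
  rw [tsum_fintype] at h
  calc ∑ z, (p z).toReal = (∑ z, p z).toReal :=
        (ENNReal.toReal_sum fun z _ => p.apply_ne_top z).symm
    _ = 1 := by rw [h]; simp

/-! ### Main theorem -/

/-- let `A` be ε-differentially private, `S ∼ 𝒫^n` i.i.d., and
`Y = A(S)`. If `Pr[S ∈ R(y)] ≤ β` for every fixed `y ∈ 𝒴`, then for
`ε ≤ √(ln(1/β) / (2n))`, `Pr[S ∈ R(Y)] ≤ 3√β`. -/
theorem pure_dp_iid_bad_event_bound
    {X Y : Type*} [Fintype X] [Fintype Y] {n : ℕ}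
    (P : PMF X) (A : (Fin n → X) → PMF Y) (ε : ℝ) (hA : DiffPrivate A ε)
    (R : Y → Set (Fin n → X)) (β : ℝ) (hβ : 0 < β)
    (hR : ∀ y : Y, pr (iid P n) (R y) ≤ ENNReal.ofReal β)
    (hε : ε ≤ Real.sqrt (Real.log (1 / β) / (2 * n))) :
    pr (joint (iid P n) A) {p : (Fin n → X) × Y | p.1 ∈ R p.2}
      ≤ ENNReal.ofReal (3 * Real.sqrt β) := by
  classical
  by_cases hβ1 : 1 ≤ β
  · -- trivial case: β ≥ 1
    have h1 : pr (joint (iid P n) A) {p : (Fin n → X) × Y | p.1 ∈ R p.2} ≤ 1 := by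
      rw [pr, PMF.toOuterMeasure_apply]
      calc ∑' z, Set.indicator {p : (Fin n → X) × Y | p.1 ∈ R p.2} (⇑(joint (iid P n) A)) z
          ≤ ∑' z, (joint (iid P n) A) z :=
            ENNReal.tsum_le_tsum fun z => Set.indicator_le_self _ _ z
        _ = 1 := (joint (iid P n) A).tsum_coe
    refine le_trans h1 (ENNReal.one_le_ofReal.2 ?_)
    have h2 : 1 ≤ Real.sqrt β := by
      have := Real.sqrt_le_sqrt hβ1
      rwa [Real.sqrt_one] at this
    linarith
  push_neg at hβ1
  -- real-valued data
  set w : X → ℝ := fun x => (P x).toReal with hwdef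
  set m : (Fin n → X) → ℝ := fun S => ∏ i, w (S i) with hmdef
  set a : (Fin n → X) → Y → ℝ := fun S y => (A S y).toReal with hadef
  set q : Y → ℝ := fun y => ∑ S, m S * a S y with hqdef
  have hw0 : ∀ x, 0 ≤ w x := fun x => ENNReal.toReal_nonneg
  have hw1 : ∑ x, w x = 1 := pmf_sum_toReal P
  have hm0 : ∀ S, 0 ≤ m S := fun S => Finset.prod_nonneg fun i _ => hw0 (S i)
  have ha0 : ∀ S y, 0 ≤ a S y := fun S y => ENNReal.toReal_nonneg
  have hm_iid : ∀ S, ((iid P n) S).toReal = m S := by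
    intro S
    rw [iid_apply, ENNReal.toReal_prod]
  have hm1 : ∑ S, m S = 1 := by
    rw [Finset.sum_congr rfl fun S _ => (hm_iid S).symm]
    exact pmf_sum_toReal (iid P n)
  have hay1 : ∀ S, ∑ y, a S y = 1 := fun S => pmf_sum_toReal (A S)
  have hq0 : ∀ y, 0 ≤ q y := fun y => Finset.sum_nonneg fun S _ => mul_nonneg (hm0 S) (ha0 S y)
  have hq1 : ∑ y, q y = 1 := by
    rw [hqdef]
    rw [Finset.sum_comm]
    calc ∑ S, ∑ y, m S * a S y = ∑ S, m S * ∑ y, a S y := by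
          exact Finset.sum_congr rfl fun S _ => (Finset.mul_sum _ _ _).symm
      _ = ∑ S, m S := by
          exact Finset.sum_congr rfl fun S _ => by rw [hay1 S, mul_one]
      _ = 1 := hm1
  -- differential privacy in real form
  have hdp : ∀ y (S S' : Fin n → X), Adjacent S S' → a S y ≤ Real.exp ε * a S' y := by
    intro y S S' h
    have h1 := hA S S' h y
    have h2 : ENNReal.ofReal (Real.exp ε) * A S' y ≠ ⊤ :=
      ENNReal.mul_ne_top ENNReal.ofReal_ne_top (PMF.apply_ne_top _ _)
    have h3 := ENNReal.toReal_mono h2 h1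
    rwa [ENNReal.toReal_mul, ENNReal.toReal_ofReal (Real.exp_nonneg ε)] at h3
  -- hypothesis hR in real form
  have hRr : ∀ y, ∑ S, (if S ∈ R y then m S else 0) ≤ β := by
    intro y
    have h1 := hR y
    rw [pr, PMF.toOuterMeasure_apply, tsum_fintype] at h1
    have h2 := ENNReal.toReal_le_of_le_ofReal (le_of_lt hβ) h1
    rw [ENNReal.toReal_sum (fun S _ => ?hne)] at h2
    case hne =>
      by_cases h : S ∈ R y
      · simp [Set.indicator_of_mem h, PMF.apply_ne_top]
      · simp [Set.indicator_of_notMem h]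
    calc ∑ S, (if S ∈ R y then m S else 0)
        = ∑ S, ((R y).indicator (⇑(iid P n)) S).toReal := by
          apply Finset.sum_congr rfl
          intro S _
          by_cases h : S ∈ R y
          · rw [if_pos h, Set.indicator_of_mem h]
            exact (hm_iid S).symm
          · rw [if_neg h, Set.indicator_of_notMem h, ENNReal.toReal_zero]
      _ ≤ β := h2
  -- log quantities
  set L : ℝ := Real.log (1 / β) with hLdef
  have hlogβ : Real.log β = -L := by
    rw [hLdef, one_div, Real.log_inv]
    ring
  have hL0 : 0 < L := by
    rw [hLdef]
    apply Real.log_pos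
    rw [lt_div_iff₀ hβ, one_mul]
    exact hβ1
  have hβexp : β = Real.exp (-L) := by
    rw [← hlogβ, Real.exp_log hβ]
  have hsb : Real.sqrt β = Real.exp (-(L / 2)) := by
    rw [Real.sqrt_eq_rpow, Real.rpow_def_of_pos hβ, hlogβ]
    congr 1
    ring
  have hsb0 : 0 ≤ Real.sqrt β := Real.sqrt_nonneg β
  -- the key exponent bound
  have h2n : 2 * (n : ℝ) * ε ^ 2 ≤ L := by
    rcases Nat.eq_zero_or_pos n with hn | hn
    · subst hn
      simp
      positivity
    · have hε0 : 0 ≤ ε := by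
        by_contra hneg
        push_neg at hneg
        obtain ⟨S₀, _⟩ := (iid P n).support_nonempty
        have hadj : Adjacent S₀ S₀ := ⟨⟨0, hn⟩, fun j _ => rfl⟩
        have h1 : (1 : ℝ≥0∞) ≤ ENNReal.ofReal (Real.exp ε) := by
          calc (1 : ℝ≥0∞) = ∑' y, A S₀ y := (A S₀).tsum_coe.symm
            _ ≤ ∑' y, ENNReal.ofReal (Real.exp ε) * A S₀ y :=
                ENNReal.tsum_le_tsum fun y => hA S₀ S₀ hadj y
            _ = ENNReal.ofReal (Real.exp ε) * ∑' y, A S₀ y := ENNReal.tsum_mul_left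
            _ = ENNReal.ofReal (Real.exp ε) := by rw [(A S₀).tsum_coe, mul_one]
        have h2 : (1 : ℝ) ≤ Real.exp ε := ENNReal.one_le_ofReal.1 h1
        rw [Real.one_le_exp_iff] at h2
        linarith
      have hdiv : (0 : ℝ) ≤ L / (2 * n) := by positivity
      have h1 : ε ^ 2 ≤ L / (2 * n) := by
        calc ε ^ 2 ≤ Real.sqrt (L / (2 * n)) ^ 2 := by
              apply pow_le_pow_left₀ hε0
              rw [hLdef] at *
              exact hε
          _ = L / (2 * n) := Real.sq_sqrt hdiv
      have hn' : (0 : ℝ) < 2 * n := by positivity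
      calc 2 * (n : ℝ) * ε ^ 2 ≤ 2 * n * (L / (2 * n)) :=
            mul_le_mul_of_nonneg_left h1 (by positivity)
        _ = L := by field_simp
  -- the moment bound
  have hmom : ∀ y, ∑ S, m S * a S y ^ 4 ≤ Real.exp (2 * n * ε ^ 2) * q y ^ 4 := by
    intro y
    have := moment w hw0 hw1 ε n (fun S => a S y) (fun S => ha0 S y)
      (fun S S' h => hdp y S S' h)
    simpa [← hmdef, ← hqdef] using this
  -- constants
  set K : ℝ := Real.exp (L / 2) with hKdef
  have hKpos : 0 < K := Real.exp_pos _
  have hK0 : 0 ≤ K := le_of_lt hKpos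
  -- express goal probability as real double sum
  have hLHS : pr (joint (iid P n) A) {p : (Fin n → X) × Y | p.1 ∈ R p.2}
      = ∑ S, ∑ y, (if S ∈ R y then (iid P n) S * A S y else 0) := by
    rw [pr, PMF.toOuterMeasure_apply, tsum_fintype, Fintype.sum_prod_type]
    apply Finset.sum_congr rfl
    intro S _
    apply Finset.sum_congr rfl
    intro y _
    by_cases h : S ∈ R y
    · rw [Set.indicator_of_mem (by exact h), joint_apply, if_pos h]
    · rw [Set.indicator_of_notMem (by exact h), if_neg h]
  rw [hLHS]
  have hfin : (∑ S, ∑ y, (if S ∈ R y then (iid P n) S * A S y else 0)) ≠ ⊤ := by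
    apply (ENNReal.sum_lt_top.2 ?_).ne
    intro S _
    apply ENNReal.sum_lt_top.2
    intro y _
    split_ifs
    · exact (ENNReal.mul_ne_top (PMF.apply_ne_top _ _) (PMF.apply_ne_top _ _)).lt_top
    · simp
  rw [ENNReal.le_ofReal_iff_toReal_le hfin (by positivity)]
  rw [ENNReal.toReal_sum (fun S _ => ?hfin1)]
  case hfin1 =>
    apply (ENNReal.sum_lt_top.2 ?_).ne
    intro y _
    split_ifs
    · exact (ENNReal.mul_ne_top (PMF.apply_ne_top _ _) (PMF.apply_ne_top _ _)).lt_top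
    · simp
  have hT : ∀ S, (∑ y, (if S ∈ R y then (iid P n) S * A S y else 0)).toReal
      = ∑ y, (if S ∈ R y then m S * a S y else 0) := by
    intro S
    rw [ENNReal.toReal_sum (fun y _ => ?hfin2)]
    case hfin2 =>
      split_ifs
      · exact ENNReal.mul_ne_top (PMF.apply_ne_top _ _) (PMF.apply_ne_top _ _)
      · simp
    apply Finset.sum_congr rfl
    intro y _
    split_ifs
    · rw [ENNReal.toReal_mul, hm_iid]
    · simp
  rw [Finset.sum_congr rfl fun S _ => hT S]
  -- now a purely real statement
  have hsplit : ∀ (S : Fin n → X) (y : Y), (if S ∈ R y then m S * a S y else 0) ≤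
      (if S ∈ R y then m S * (K * q y) else 0) + (if K * q y < a S y then m S * a S y else 0) := by
    intro S y
    by_cases h1 : S ∈ R y
    · by_cases h2 : K * q y < a S y
      · rw [if_pos h1, if_pos h1, if_pos h2]
        have : 0 ≤ m S * (K * q y) := mul_nonneg (hm0 S) (mul_nonneg hK0 (hq0 y))
        linarith
      · rw [if_pos h1, if_pos h1, if_neg h2]
        push_neg at h2
        have h3 := mul_le_mul_of_nonneg_left h2 (hm0 S)
        have h4 : (0:ℝ) ≤ if K * q y < a S y then m S * a S y else 0 := by
          split_ifs
          · exact mul_nonneg (hm0 S) (ha0 S y)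
          · exact le_refl 0
        linarith
    · rw [if_neg h1, if_neg h1]
      rw [zero_add]
      split_ifs
      · exact mul_nonneg (hm0 S) (ha0 S y)
      · exact le_refl 0
  have hT1 : ∑ S, ∑ y, (if S ∈ R y then m S * (K * q y) else 0) ≤ K * β := by
    rw [Finset.sum_comm]
    have h1 : ∀ y, ∑ S, (if S ∈ R y then m S * (K * q y) else 0) ≤ β * (K * q y) := by
      intro y
      have h2 : ∑ S, (if S ∈ R y then m S * (K * q y) else 0)
          = (∑ S, if S ∈ R y then m S else 0) * (K * q y) := by
        rw [Finset.sum_mul]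
        exact Finset.sum_congr rfl fun S _ => by split_ifs <;> ring
      rw [h2]
      exact mul_le_mul_of_nonneg_right (hRr y) (mul_nonneg hK0 (hq0 y))
    calc ∑ y, ∑ S, (if S ∈ R y then m S * (K * q y) else 0)
        ≤ ∑ y, β * (K * q y) := Finset.sum_le_sum fun y _ => h1 y
      _ = K * β := by
          rw [← Finset.mul_sum, ← Finset.mul_sum, hq1]
          ring
  have hT2 : ∑ S, ∑ y, (if K * q y < a S y then m S * a S y else 0)
      ≤ Real.exp (2 * n * ε ^ 2) / K ^ 3 := by
    rw [Finset.sum_comm]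
    have h1 : ∀ y, ∑ S, (if K * q y < a S y then m S * a S y else 0)
        ≤ Real.exp (2 * n * ε ^ 2) * q y / K ^ 3 := by
      intro y
      rcases eq_or_lt_of_le (hq0 y) with hq | hq
      · have hz : ∀ S, m S * a S y = 0 := by
          intro S
          have hsum0 : ∑ S, m S * a S y = 0 := hq.symm
          exact (Finset.sum_eq_zero_iff_of_nonneg
            (fun S _ => mul_nonneg (hm0 S) (ha0 S y))).1 hsum0 S (Finset.mem_univ S)
        calc ∑ S, (if K * q y < a S y then m S * a S y else 0) = 0 := by
              apply Finset.sum_eq_zero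
              intro S _
              split_ifs with h
              · exact hz S
              · rfl
          _ ≤ Real.exp (2 * n * ε ^ 2) * q y / K ^ 3 := by positivity
      · have hKq : 0 < K * q y := mul_pos hKpos hq
        have h2 : ∀ S : Fin n → X, (if K * q y < a S y then m S * a S y else 0)
            ≤ m S * a S y ^ 4 / (K * q y) ^ 3 := by
          intro S
          split_ifs with h3
          · rw [le_div_iff₀ (by positivity)]
            have h4 : (K * q y) ^ 3 ≤ a S y ^ 3 :=
              pow_le_pow_left₀ (le_of_lt hKq) (le_of_lt h3) 3
            have h5 : m S * a S y * (K * q y) ^ 3 ≤ m S * a S y * a S y ^ 3 :=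
              mul_le_mul_of_nonneg_left h4 (mul_nonneg (hm0 S) (ha0 S y))
            calc m S * a S y * (K * q y) ^ 3 ≤ m S * a S y * a S y ^ 3 := h5
              _ = m S * a S y ^ 4 := by ring
          · positivity
        calc ∑ S, (if K * q y < a S y then m S * a S y else 0)
            ≤ ∑ S, m S * a S y ^ 4 / (K * q y) ^ 3 := Finset.sum_le_sum fun S _ => h2 S
          _ = (∑ S, m S * a S y ^ 4) / (K * q y) ^ 3 := by rw [← Finset.sum_div]
          _ ≤ (Real.exp (2 * n * ε ^ 2) * q y ^ 4) / (K * q y) ^ 3 := by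
              apply div_le_div_of_nonneg_right (hmom y) (by positivity)
          _ = Real.exp (2 * n * ε ^ 2) * q y / K ^ 3 := by
              field_simp
    calc ∑ y, ∑ S, (if K * q y < a S y then m S * a S y else 0)
        ≤ ∑ y, Real.exp (2 * n * ε ^ 2) * q y / K ^ 3 := Finset.sum_le_sum fun y _ => h1 y
      _ = Real.exp (2 * n * ε ^ 2) / K ^ 3 := by
          rw [← Finset.sum_div, ← Finset.mul_sum, hq1, mul_one]
  have hKβ : K * β = Real.sqrt β := by
    rw [hsb, hKdef, hβexp, ← Real.exp_add]
    congr 1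
    ring
  have hterm2 : Real.exp (2 * n * ε ^ 2) / K ^ 3 ≤ Real.sqrt β := by
    have hK3 : K ^ 3 = Real.exp (3 * (L / 2)) := by
      rw [hKdef, show (3 : ℝ) * (L / 2) = ((3 : ℕ) : ℝ) * (L / 2) by norm_num, Real.exp_nat_mul]
    rw [hK3, ← Real.exp_sub, hsb]
    apply Real.exp_le_exp.2
    linarith
  calc ∑ S, ∑ y, (if S ∈ R y then m S * a S y else 0)
      ≤ ∑ S, ∑ y, ((if S ∈ R y then m S * (K * q y) else 0)
          + (if K * q y < a S y then m S * a S y else 0)) := by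
        apply Finset.sum_le_sum
        intro S _
        exact Finset.sum_le_sum fun y _ => hsplit S y
    _ = (∑ S, ∑ y, (if S ∈ R y then m S * (K * q y) else 0))
        + ∑ S, ∑ y, (if K * q y < a S y then m S * a S y else 0) := by
        rw [← Finset.sum_add_distrib]
        exact Finset.sum_congr rfl fun S _ => Finset.sum_add_distrib
    _ ≤ K * β + Real.exp (2 * n * ε ^ 2) / K ^ 3 := add_le_add hT1 hT2
    _ ≤ Real.sqrt β + Real.sqrt β := by
        rw [hKβ]
        exact add_le_add_right hterm2 _
    _ ≤ 3 * Real.sqrt β := by linarith
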